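/- Define sequences (a_k), (b_k) of reals by a_0 = b_0 = 0, a_1 = (13/14) b_1, b_1 = (35/27) A for a given real constant A, and for k ≥ 2, (a_k, b_k)ᵀ = M_k^{-1} N_k (a_{k-1}, b_{k-1})ᵀ with M_k = [[8k+6, −13], [−10, 8k+9]] and N_k = [[8(k−1), 0], [−10, 8(k−1)]]. Then the series Γ̄₁(γ) = Σ_{k≥0} a_k (γ²/(1+γ²))^k and Γ̄₂(γ) = Σ_{k≥0} b_k (γ²/(1+γ²))^k converge absolutely and uniformly on [0,∞), and their sums satisfy the system 4γ Γ̄₁'(γ) + 6 Γ̄₁ − 13 Γ̄₂ = 0 and 4γ Γ̄₂'(γ) + 9 Γ̄₂ − (10/(1+γ²))(Γ̄₁ + γ² A) = 0 on (0, ∞). -/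

import Mathlib

open Real Set Filter Matrix

noncomputable def Mmat (k : ℕ) : Matrix (Fin 2) (Fin 2) ℝ :=
  !![8 * (k : ℝ) + 6, -13; -10, 8 * (k : ℝ) + 9]

noncomputable def Nmat (k : ℕ) : Matrix (Fin 2) (Fin 2) ℝ :=
  !![8 * ((k : ℝ) - 1), 0; -10, 8 * ((k : ℝ) - 1)]

/-- Telescoping sum lemma. -/
lemma tsum_eq_of_telescope (t g : ℕ → ℝ) (hs : Summable t)
    (ht : ∀ n, t n = g n - g (n + 1)) (hg : Tendsto g atTop (nhds 0)) :
    ∑' n, t n = g 0 := by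
  have h1 : Tendsto (fun n => ∑ i ∈ Finset.range n, t i) atTop (nhds (∑' n, t n)) :=
    hs.hasSum.tendsto_sum_nat
  have h2 : (fun n => ∑ i ∈ Finset.range n, t i) = fun n => g 0 - g n := by
    funext n
    simp only [ht]
    exact Finset.sum_range_sub' g n
  rw [h2] at h1
  have h3 : Tendsto (fun n => g 0 - g n) atTop (nhds (g 0 - 0)) := tendsto_const_nhds.sub hg
  rw [sub_zero] at h3
  exact tendsto_nhds_unique h1 h3

set_option maxHeartbeats 1000000 in
theorem profile_series_solves_system
    (A : ℝ) (a b : ℕ → ℝ)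
    (ha0 : a 0 = 0) (hb0 : b 0 = 0)
    (hb1 : b 1 = (35 / 27) * A) (ha1 : a 1 = (13 / 14) * b 1)
    (hrec : ∀ k, 2 ≤ k →
      ![a k, b k] = ((Mmat k)⁻¹ * Nmat k).mulVec ![a (k - 1), b (k - 1)]) :
    ∃ Γ₁ Γ₂ : ℝ → ℝ,
      (∀ γ : ℝ, 0 ≤ γ →
        Summable (fun k : ℕ => |a k * (γ ^ 2 / (1 + γ ^ 2)) ^ k|) ∧
        Summable (fun k : ℕ => |b k * (γ ^ 2 / (1 + γ ^ 2)) ^ k|) ∧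
        Γ₁ γ = ∑' k : ℕ, a k * (γ ^ 2 / (1 + γ ^ 2)) ^ k ∧
        Γ₂ γ = ∑' k : ℕ, b k * (γ ^ 2 / (1 + γ ^ 2)) ^ k) ∧
      TendstoUniformlyOn
        (fun n γ => ∑ k ∈ Finset.range n, a k * (γ ^ 2 / (1 + γ ^ 2)) ^ k)
        Γ₁ atTop (Ici 0) ∧
      TendstoUniformlyOn
        (fun n γ => ∑ k ∈ Finset.range n, b k * (γ ^ 2 / (1 + γ ^ 2)) ^ k)
        Γ₂ atTop (Ici 0) ∧
      (∀ γ : ℝ, 0 < γ → ∃ d₁ d₂ : ℝ,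
        HasDerivAt Γ₁ d₁ γ ∧ HasDerivAt Γ₂ d₂ γ ∧
        4 * γ * d₁ + 6 * Γ₁ γ - 13 * Γ₂ γ = 0 ∧
        4 * γ * d₂ + 9 * Γ₂ γ - (10 / (1 + γ ^ 2)) * (Γ₁ γ + γ ^ 2 * A) = 0) := by
  -- Step 1: component equations from the matrix recursion
  have hcomp : ∀ k : ℕ, 2 ≤ k →
      ((8*(k:ℝ)+6) * a k - 13 * b k = 8*((k:ℝ)-1) * a (k-1) ∧
       -10 * a k + (8*(k:ℝ)+9) * b k = -10 * a (k-1) + 8*((k:ℝ)-1) * b (k-1)) := by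
    intro k hk
    have hk2 : (2:ℝ) ≤ (k:ℝ) := by exact_mod_cast hk
    have hdet : IsUnit (Mmat k).det := by
      rw [Mmat, Matrix.det_fin_two_of]
      apply isUnit_iff_ne_zero.2
      nlinarith
    have h2 : (Mmat k).mulVec ![a k, b k] = (Nmat k).mulVec ![a (k-1), b (k-1)] := by
      rw [hrec k hk, Matrix.mulVec_mulVec, ← Matrix.mul_assoc,
        Matrix.mul_nonsing_inv _ hdet, Matrix.one_mul]
    have e0 := congrFun h2 0
    have e1 := congrFun h2 1
    simp [Mmat, Nmat, Matrix.mulVec, dotProduct, Fin.sum_univ_two] at e0 e1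
    exact ⟨by linarith [e0], by linarith [e1]⟩
  have hE1 : ∀ m : ℕ, (8*((m:ℝ)+1)+6) * a (m+1) - 13 * b (m+1) = 8*(m:ℝ) * a m := by
    intro m
    rcases Nat.eq_zero_or_pos m with hm | hm
    · subst hm
      simp only [Nat.cast_zero]
      rw [ha1]
      ring
    · have h := (hcomp (m+1) (by omega)).1
      have : ((m+1 : ℕ) : ℝ) = (m:ℝ) + 1 := by push_cast; ring
      rw [this] at h
      simpa using h
  have hE2 : ∀ m : ℕ, -10 * a (m+1) + (8*((m:ℝ)+1)+9) * b (m+1)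
      = -10 * a m + 8*(m:ℝ) * b m + (if m = 0 then 10*A else 0) := by
    intro m
    rcases Nat.eq_zero_or_pos m with hm | hm
    · subst hm
      rw [ha1, hb1, ha0, hb0]
      norm_num
      ring
    · have h := (hcomp (m+1) (by omega)).2
      have hc : ((m+1 : ℕ) : ℝ) = (m:ℝ) + 1 := by push_cast; ring
      rw [hc] at h
      rw [if_neg (by omega)]
      simpa using h
  -- Step 2: solved recursion
  have hsolve : ∀ m : ℕ, 1 ≤ m →
      ((64*(m:ℝ)^2+248*(m:ℝ)+108) * a (m+1)
          = (64*(m:ℝ)^2+136*(m:ℝ)-130) * a m + (104*(m:ℝ)) * b m ∧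
       (64*(m:ℝ)^2+248*(m:ℝ)+108) * b (m+1)
          = -140 * a m + (64*(m:ℝ)^2+112*(m:ℝ)) * b m) := by
    intro m hm
    have e1 := hE1 m
    have e2 := hE2 m
    rw [if_neg (by omega)] at e2
    constructor
    · linear_combination (8*(m:ℝ)+17) * e1 + 13 * e2
    · linear_combination 10 * e1 + (8*(m:ℝ)+14) * e2
  -- Step 3: decay of the weighted norm
  set nn : ℕ → ℝ := fun k => max |a k| ((5/2) * |b k|) with hnn_def
  have hnn0 : ∀ k, 0 ≤ nn k := fun k => le_trans (abs_nonneg _) (le_max_left _ _)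
  have hnn_a : ∀ k, |a k| ≤ nn k := fun k => le_max_left _ _
  have hnn_b : ∀ k, |b k| ≤ nn k := fun k =>
    le_trans (by nlinarith [abs_nonneg (b k)]) (le_max_right _ _)
  have hnn_b' : ∀ k, |b k| ≤ (2/5) * nn k := by
    intro k
    have := le_max_right |a k| ((5/2) * |b k|)
    nlinarith [this]
  have hcontr : ∀ m : ℕ, 7 ≤ m →
      nn (m+1) ≤ ((10*((m:ℝ)+1)-11)/(10*((m:ℝ)+1))) * nn m := by
    intro m hm
    obtain ⟨e1, e2⟩ := hsolve m (by omega)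
    have hM : (7:ℝ) ≤ (m:ℝ) := by exact_mod_cast hm
    set M := (m:ℝ) with hMdef
    have hd : (0:ℝ) < 64*M^2+248*M+108 := by nlinarith
    have hc1 : (0:ℝ) ≤ 64*M^2+136*M-130 := by nlinarith
    have key_a : |a (m+1)| ≤ ((10*(M+1)-11)/(10*(M+1))) * nn m := by
      have ha' : (64*M^2+248*M+108) * |a (m+1)|
          ≤ (64*M^2+136*M-130 + (104*M)*(2/5)) * nn m := by
        have h1 : (64*M^2+248*M+108) * |a (m+1)| = |(64*M^2+248*M+108) * a (m+1)| := by
          rw [abs_mul, abs_of_pos hd]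
        rw [h1, e1]
        calc |(64*M^2+136*M-130) * a m + (104*M) * b m|
            ≤ |(64*M^2+136*M-130) * a m| + |(104*M) * b m| := abs_add_le _ _
          _ = (64*M^2+136*M-130) * |a m| + (104*M) * |b m| := by
              rw [abs_mul, abs_mul, abs_of_nonneg hc1,
                abs_of_nonneg (by nlinarith : (0:ℝ) ≤ 104*M)]
          _ ≤ (64*M^2+136*M-130) * nn m + (104*M) * ((2/5) * nn m) := by
              gcongr
              · exact hnn_a m
              · exact hnn_b' m
          _ = (64*M^2+136*M-130 + (104*M)*(2/5)) * nn m := by ring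
      have step : |a (m+1)|
          ≤ ((64*M^2+136*M-130 + (104*M)*(2/5))/(64*M^2+248*M+108)) * nn m := by
        rw [div_mul_eq_mul_div, le_div_iff₀ hd]
        calc |a (m+1)| * (64*M^2+248*M+108) = (64*M^2+248*M+108) * |a (m+1)| := by ring
          _ ≤ (64*M^2+136*M-130 + (104*M)*(2/5)) * nn m := ha'
      refine le_trans step (mul_le_mul_of_nonneg_right ?_ (hnn0 m))
      rw [div_le_div_iff₀ hd (by nlinarith : (0:ℝ) < 10*(M+1))]
      nlinarith
    have key_b : (5/2) * |b (m+1)| ≤ ((10*(M+1)-11)/(10*(M+1))) * nn m := by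
      have hb' : (64*M^2+248*M+108) * ((5/2) * |b (m+1)|)
          ≤ (64*M^2+112*M+350) * nn m := by
        have h2 : |(64*M^2+248*M+108) * b (m+1)|
            ≤ 140 * |a m| + (64*M^2+112*M) * |b m| := by
          rw [e2]
          calc |-140 * a m + (64*M^2+112*M) * b m|
              ≤ |(-140) * a m| + |(64*M^2+112*M) * b m| := abs_add_le _ _
            _ = 140 * |a m| + (64*M^2+112*M) * |b m| := by
                rw [abs_mul, abs_mul,
                  abs_of_nonneg (by nlinarith : (0:ℝ) ≤ 64*M^2+112*M)]
                norm_num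
        have h3 : 140 * |a m| + (64*M^2+112*M) * |b m|
            ≤ 140 * nn m + (64*M^2+112*M) * ((2/5) * nn m) := by
          gcongr
          · exact hnn_a m
          · exact hnn_b' m
        calc (64*M^2+248*M+108) * ((5/2) * |b (m+1)|)
            = (5/2) * |(64*M^2+248*M+108) * b (m+1)| := by
              rw [abs_mul, abs_of_pos hd]; ring
          _ ≤ (5/2) * (140 * |a m| + (64*M^2+112*M) * |b m|) :=
              mul_le_mul_of_nonneg_left h2 (by norm_num)
          _ ≤ (5/2) * (140 * nn m + (64*M^2+112*M) * ((2/5) * nn m)) :=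
              mul_le_mul_of_nonneg_left h3 (by norm_num)
          _ = (64*M^2+112*M+350) * nn m := by ring
      have step : (5/2) * |b (m+1)|
          ≤ ((64*M^2+112*M+350)/(64*M^2+248*M+108)) * nn m := by
        rw [div_mul_eq_mul_div (64*M^2+112*M+350) (64*M^2+248*M+108) (nn m),
          le_div_iff₀ hd]
        calc (5/2) * |b (m+1)| * (64*M^2+248*M+108)
            = (64*M^2+248*M+108) * ((5/2) * |b (m+1)|) := by ring
          _ ≤ (64*M^2+112*M+350) * nn m := hb'
      refine le_trans step (mul_le_mul_of_nonneg_right ?_ (hnn0 m))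
      rw [div_le_div_iff₀ hd (by nlinarith : (0:ℝ) < 10*(M+1))]
      have hx : (0:ℝ) ≤ M * (M - 7) :=
        mul_nonneg (by linarith) (by linarith)
      nlinarith [hx]
    exact max_le key_a key_b
  -- Step 4: Bernoulli and monotonicity of nn k * k^{11/10}
  have hber : ∀ m : ℕ, 7 ≤ m →
      ((10*((m:ℝ)+1)-11)/(10*((m:ℝ)+1))) ≤ ((m:ℝ)/((m:ℝ)+1)) ^ (11/10:ℝ) := by
    intro m hm
    have hM : (7:ℝ) ≤ (m:ℝ) := by exact_mod_cast hm
    have hs : (-1:ℝ) ≤ -(1/((m:ℝ)+1)) := by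
      rw [neg_le_neg_iff]
      rw [div_le_one (by linarith)]
      linarith
    have h := one_add_mul_self_le_rpow_one_add hs (p := 11/10) (by norm_num)
    have e1 : 1 + (11/10) * -(1/((m:ℝ)+1)) = (10*((m:ℝ)+1)-11)/(10*((m:ℝ)+1)) := by
      field_simp
      ring
    have e2 : 1 + -(1/((m:ℝ)+1)) = (m:ℝ)/((m:ℝ)+1) := by
      field_simp
      ring
    rw [e1, e2] at h
    exact h
  have hphi : ∀ m : ℕ, 7 ≤ m →
      nn m * (m:ℝ) ^ (11/10:ℝ) ≤ nn 7 * (7:ℝ) ^ (11/10:ℝ) := by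
    intro m hm
    induction m, hm using Nat.le_induction with
    | base => norm_num
    | succ m hm ih =>
      have hM : (7:ℝ) ≤ (m:ℝ) := by exact_mod_cast hm
      have hM1 : (0:ℝ) < (m:ℝ) + 1 := by linarith
      have h1 : nn (m+1) ≤ ((m:ℝ)/((m:ℝ)+1)) ^ (11/10:ℝ) * nn m :=
        le_trans (hcontr m hm) (mul_le_mul_of_nonneg_right (hber m hm) (hnn0 m))
      have hcast : ((m+1 : ℕ) : ℝ) = (m:ℝ) + 1 := by push_cast; ring
      rw [hcast]
      calc nn (m+1) * ((m:ℝ)+1) ^ (11/10:ℝ)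
          ≤ (((m:ℝ)/((m:ℝ)+1)) ^ (11/10:ℝ) * nn m) * ((m:ℝ)+1) ^ (11/10:ℝ) := by
            apply mul_le_mul_of_nonneg_right h1 (Real.rpow_nonneg (by linarith) _)
        _ = nn m * (m:ℝ) ^ (11/10:ℝ) := by
            rw [Real.div_rpow (by linarith) (by linarith)]
            field_simp [ne_of_gt (Real.rpow_pos_of_pos hM1 (11/10:ℝ))]
        _ ≤ nn 7 * (7:ℝ) ^ (11/10:ℝ) := ih
  -- Step 5: summable bound sequence
  set C : ℝ := nn 7 * (7:ℝ) ^ (11/10:ℝ) with hCdef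
  have hC0 : 0 ≤ C := mul_nonneg (hnn0 7) (Real.rpow_nonneg (by norm_num) _)
  set u : ℕ → ℝ := fun k => if k < 7 then |a k| + |b k| else C * (((k:ℝ)) ^ (11/10:ℝ))⁻¹
    with hu_def
  have hu0 : ∀ k, 0 ≤ u k := by
    intro k
    simp only [hu_def]
    split
    · positivity
    · positivity
  have hnn_le : ∀ k : ℕ, 7 ≤ k → nn k ≤ C * (((k:ℝ)) ^ (11/10:ℝ))⁻¹ := by
    intro k hk
    have hk7 : (7:ℝ) ≤ (k:ℝ) := by exact_mod_cast hk
    have hkp : (0:ℝ) < (k:ℝ) ^ (11/10:ℝ) := Real.rpow_pos_of_pos (by linarith) _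
    rw [← div_eq_mul_inv, le_div_iff₀ hkp]
    exact hphi k hk
  have hua : ∀ k, |a k| ≤ u k := by
    intro k
    simp only [hu_def]
    split
    · nlinarith [abs_nonneg (b k)]
    · exact le_trans (hnn_a k) (hnn_le k (by omega))
  have hub : ∀ k, |b k| ≤ u k := by
    intro k
    simp only [hu_def]
    split
    · nlinarith [abs_nonneg (a k)]
    · exact le_trans (hnn_b k) (hnn_le k (by omega))
  have husum : Summable u := by
    have hg : Summable (fun k : ℕ => C * (((k:ℝ)) ^ (11/10:ℝ))⁻¹) := by
      have h := Real.summable_one_div_nat_rpow.mpr (show (1:ℝ) < 11/10 by norm_num)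
      simpa [one_div] using h.mul_left C
    refine (summable_nat_add_iff 7).1 (Summable.congr ((summable_nat_add_iff 7).2 hg) ?_)
    intro n
    simp only [hu_def]
    rw [if_neg (by omega)]
  -- basic facts about X γ = γ²/(1+γ²)
  have hden : ∀ γ : ℝ, (0:ℝ) < 1 + γ^2 := fun γ => by positivity
  have hX0 : ∀ γ : ℝ, 0 ≤ γ^2/(1+γ^2) := fun γ => div_nonneg (sq_nonneg γ) (hden γ).le
  have hX1 : ∀ γ : ℝ, γ^2/(1+γ^2) < 1 := by
    intro γ
    rw [div_lt_one (hden γ)]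
    linarith [sq_nonneg γ]
  have habs_term : ∀ (c : ℕ → ℝ), (∀ k, |c k| ≤ u k) → ∀ (γ : ℝ) (k : ℕ),
      |c k * (γ^2/(1+γ^2))^k| ≤ u k := by
    intro c hc γ k
    rw [abs_mul, abs_pow, abs_of_nonneg (hX0 γ)]
    calc |c k| * (γ^2/(1+γ^2))^k ≤ u k * 1 := by
          apply mul_le_mul (hc k) (pow_le_one₀ (hX0 γ) (hX1 γ).le)
            (pow_nonneg (hX0 γ) k) (hu0 k)
      _ = u k := mul_one _
  have hsummable : ∀ (c : ℕ → ℝ), (∀ k, |c k| ≤ u k) → ∀ γ : ℝ,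
      Summable (fun k : ℕ => |c k * (γ^2/(1+γ^2))^k|) := by
    intro c hc γ
    exact Summable.of_nonneg_of_le (fun _ => abs_nonneg _) (fun k => habs_term c hc γ k) husum
  -- the global bound U
  set U : ℝ := ∑' k, u k with hUdef
  have hU : ∀ k, u k ≤ U := fun k => husum.le_tsum k (fun m _ => hu0 m)
  have hUa : ∀ k, |a k| ≤ U := fun k => le_trans (hua k) (hU k)
  have hUb : ∀ k, |b k| ≤ U := fun k => le_trans (hub k) (hU k)
  have hU0 : 0 ≤ U := le_trans (abs_nonneg (a 0)) (hUa 0)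
  refine ⟨fun γ => ∑' k : ℕ, a k * (γ ^ 2 / (1 + γ ^ 2)) ^ k,
          fun γ => ∑' k : ℕ, b k * (γ ^ 2 / (1 + γ ^ 2)) ^ k, ?_, ?_, ?_, ?_⟩
  · intro γ _
    exact ⟨hsummable a hua γ, hsummable b hub γ, rfl, rfl⟩
  · exact tendstoUniformlyOn_tsum_nat husum
      (fun k γ _ => by rw [Real.norm_eq_abs]; exact habs_term a hua γ k)
  · exact tendstoUniformlyOn_tsum_nat husum
      (fun k γ _ => by rw [Real.norm_eq_abs]; exact habs_term b hub γ k)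
  · -- the ODE system
    intro γ₀ hγ₀
    have hden₀ : (0:ℝ) < 1 + γ₀^2 := hden γ₀
    have hden₀' : (1:ℝ) + γ₀^2 ≠ 0 := ne_of_gt hden₀
    have hY0 : (0:ℝ) ≤ (γ₀^2/(1+γ₀^2)) := hX0 γ₀
    have hY1 : (γ₀^2/(1+γ₀^2)) < 1 := hX1 γ₀
    have hγ₀s : γ₀ ∈ Ioo (0:ℝ) (γ₀+1) := ⟨hγ₀, by linarith⟩
    have hr0 : (0:ℝ) ≤ (γ₀+1)^2/(1+(γ₀+1)^2) := hX0 (γ₀+1)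
    have hr1 : (γ₀+1)^2/(1+(γ₀+1)^2) < 1 := hX1 (γ₀+1)
    have hXr : ∀ γ ∈ Ioo (0:ℝ) (γ₀+1), γ^2/(1+γ^2) ≤ (γ₀+1)^2/(1+(γ₀+1)^2) := by
      intro γ hγ
      obtain ⟨h1, h2⟩ := hγ
      rw [div_le_div_iff₀ (hden γ) (hden (γ₀+1))]
      nlinarith [sq_nonneg γ, sq_nonneg (γ₀+1)]
    -- summability of n * r^(n-1)
    have hvsum : Summable (fun n : ℕ => (n:ℝ) * ((γ₀+1)^2/(1+(γ₀+1)^2))^(n-1)) := by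
      have h2 : Summable (fun n : ℕ => ((n:ℝ)^1) * ((γ₀+1)^2/(1+(γ₀+1)^2))^n) :=
        summable_pow_mul_geometric_of_norm_lt_one 1
          (by rwa [Real.norm_eq_abs, abs_of_nonneg hr0])
      have h3 : Summable (fun n : ℕ => ((γ₀+1)^2/(1+(γ₀+1)^2))^n) :=
        summable_geometric_of_lt_one hr0 hr1
      have h1 : Summable (fun n : ℕ => ((n:ℝ)+1) * ((γ₀+1)^2/(1+(γ₀+1)^2))^n) := by
        have := h2.add h3
        refine this.congr ?_
        intro n
        push_cast
        ring
      refine (summable_nat_add_iff 1).1 (h1.congr ?_)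
      intro n
      push_cast
      norm_num
    -- derivative of each term
    have hXder : ∀ γ : ℝ, HasDerivAt (fun γ : ℝ => γ^2/(1+γ^2)) (2*γ/(1+γ^2)^2) γ := by
      intro γ
      have hnum : HasDerivAt (fun γ:ℝ => γ^2) (2*γ) γ := by
        simpa using hasDerivAt_pow 2 γ
      have hden2 : HasDerivAt (fun γ:ℝ => 1+γ^2) (2*γ) γ := by
        simpa using hnum.const_add 1
      have h := hnum.div hden2 (ne_of_gt (hden γ))
      exact h.congr_deriv (by ring)
    have hterm_der : ∀ (c : ℕ → ℝ) (n : ℕ) (γ : ℝ),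
        HasDerivAt (fun γ => c n * (γ^2/(1+γ^2))^n)
          (c n * ((n:ℝ) * (γ^2/(1+γ^2))^(n-1) * (2*γ/(1+γ^2)^2))) γ :=
      fun c n γ => ((hXder γ).pow n).const_mul (c n)
    have hDbound : ∀ γ ∈ Ioo (0:ℝ) (γ₀+1), |2*γ/(1+γ^2)^2| ≤ 2*(γ₀+1) := by
      intro γ hγ
      obtain ⟨h1, h2⟩ := hγ
      rw [abs_div, abs_of_nonneg (by linarith : (0:ℝ) ≤ 2*γ),
        abs_of_nonneg (by positivity : (0:ℝ) ≤ (1+γ^2)^2)]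
      rw [div_le_iff₀ (by positivity)]
      nlinarith [sq_nonneg γ, sq_nonneg (γ^2), sq_nonneg (1+γ^2)]
    have hbound : ∀ (c : ℕ → ℝ), (∀ k, |c k| ≤ U) → ∀ (n : ℕ), ∀ γ ∈ Ioo (0:ℝ) (γ₀+1),
        ‖c n * ((n:ℝ) * (γ^2/(1+γ^2))^(n-1) * (2*γ/(1+γ^2)^2))‖
          ≤ U * (2*(γ₀+1)) * ((n:ℝ) * ((γ₀+1)^2/(1+(γ₀+1)^2))^(n-1)) := by
      intro c hc n γ hγ
      rw [Real.norm_eq_abs, abs_mul, abs_mul, abs_mul, Nat.abs_cast, abs_pow,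
        abs_of_nonneg (hX0 γ)]
      calc |c n| * ((n:ℝ) * (γ^2/(1+γ^2))^(n-1) * |2*γ/(1+γ^2)^2|)
          ≤ U * ((n:ℝ) * ((γ₀+1)^2/(1+(γ₀+1)^2))^(n-1) * (2*(γ₀+1))) := by
            have hh1 := hXr γ hγ
            have hh2 := hDbound γ hγ
            have hh3 := hX0 γ
            gcongr
            exact hc n
        _ = U * (2*(γ₀+1)) * ((n:ℝ) * ((γ₀+1)^2/(1+(γ₀+1)^2))^(n-1)) := by ring
    have hvsum2 : Summable (fun n : ℕ =>
        U * (2*(γ₀+1)) * ((n:ℝ) * ((γ₀+1)^2/(1+(γ₀+1)^2))^(n-1))) := hvsum.mul_left _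
    have hder : ∀ (c : ℕ → ℝ), (∀ k, |c k| ≤ u k) → (∀ k, |c k| ≤ U) →
        HasDerivAt (fun γ => ∑' k : ℕ, c k * (γ^2/(1+γ^2))^k)
          (∑' k : ℕ, c k * ((k:ℝ) * (γ₀^2/(1+γ₀^2))^(k-1) * (2*γ₀/(1+γ₀^2)^2))) γ₀ := by
      intro c hcu hcU
      exact hasDerivAt_tsum_of_isPreconnected hvsum2 isOpen_Ioo isPreconnected_Ioo
        (fun n γ _ => hterm_der c n γ) (fun n γ hγ => hbound c hcU n γ hγ) hγ₀s
        ((hsummable c hcu γ₀).of_abs) hγ₀s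
    -- summability at γ₀
    have Sa : Summable (fun n : ℕ => a n * (γ₀^2/(1+γ₀^2))^n) := (hsummable a hua γ₀).of_abs
    have Sb : Summable (fun n : ℕ => b n * (γ₀^2/(1+γ₀^2))^n) := (hsummable b hub γ₀).of_abs
    have Sna : Summable (fun n : ℕ => a n * ((n:ℝ) * (γ₀^2/(1+γ₀^2))^(n-1) * (2*γ₀/(1+γ₀^2)^2))) :=
      Summable.of_norm_bounded hvsum2 (fun n => hbound a hUa n γ₀ hγ₀s)
    have Snb : Summable (fun n : ℕ => b n * ((n:ℝ) * (γ₀^2/(1+γ₀^2))^(n-1) * (2*γ₀/(1+γ₀^2)^2))) :=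
      Summable.of_norm_bounded hvsum2 (fun n => hbound b hUb n γ₀ hγ₀s)
    -- key algebraic facts
    have hD4 : 4*γ₀*(2*γ₀/(1+γ₀^2)^2) = 8*((γ₀^2/(1+γ₀^2)) - (γ₀^2/(1+γ₀^2))*(γ₀^2/(1+γ₀^2))) := by
      field_simp
      ring
    have hW : 10/(1+γ₀^2) = 10 - 10*(γ₀^2/(1+γ₀^2)) := by
      field_simp
      ring
    -- geometric-decay tails
    have htendaux : Tendsto (fun n : ℕ => (n:ℝ) * (γ₀^2/(1+γ₀^2))^n) atTop (nhds 0) :=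
      tendsto_self_mul_const_pow_of_lt_one hY0 hY1
    have htendpow : Tendsto (fun n : ℕ => (γ₀^2/(1+γ₀^2))^n) atTop (nhds 0) :=
      tendsto_pow_atTop_nhds_zero_of_lt_one hY0 hY1
    -- first equation
    have hEq1 : 4*γ₀*(∑' n : ℕ, a n * ((n:ℝ) * (γ₀^2/(1+γ₀^2))^(n-1) * (2*γ₀/(1+γ₀^2)^2)))
        + 6*(∑' n : ℕ, a n * (γ₀^2/(1+γ₀^2))^n) - 13*(∑' n : ℕ, b n * (γ₀^2/(1+γ₀^2))^n) = 0 := by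
      have hsum1 : Summable (fun n : ℕ => 4*γ₀*(a n * ((n:ℝ) * (γ₀^2/(1+γ₀^2))^(n-1) * (2*γ₀/(1+γ₀^2)^2)))) :=
        Sna.mul_left _
      have hsum2 : Summable (fun n : ℕ => 6*(a n * (γ₀^2/(1+γ₀^2))^n)) := Sa.mul_left _
      have hsum3 : Summable (fun n : ℕ => 13*(b n * (γ₀^2/(1+γ₀^2))^n)) := Sb.mul_left _
      have hcombine : 4*γ₀*(∑' n : ℕ, a n * ((n:ℝ) * (γ₀^2/(1+γ₀^2))^(n-1) * (2*γ₀/(1+γ₀^2)^2)))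
          + 6*(∑' n : ℕ, a n * (γ₀^2/(1+γ₀^2))^n) - 13*(∑' n : ℕ, b n * (γ₀^2/(1+γ₀^2))^n)
          = ∑' n : ℕ, (4*γ₀*(a n * ((n:ℝ) * (γ₀^2/(1+γ₀^2))^(n-1) * (2*γ₀/(1+γ₀^2)^2)))
              + 6*(a n * (γ₀^2/(1+γ₀^2))^n) - 13*(b n * (γ₀^2/(1+γ₀^2))^n)) := by
        rw [(hsum1.add hsum2).tsum_sub hsum3, hsum1.tsum_add hsum2,
          tsum_mul_left, tsum_mul_left, tsum_mul_left]
      rw [hcombine]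
      have hterm : ∀ n : ℕ, (4*γ₀*(a n * ((n:ℝ) * (γ₀^2/(1+γ₀^2))^(n-1) * (2*γ₀/(1+γ₀^2)^2)))
          + 6*(a n * (γ₀^2/(1+γ₀^2))^n) - 13*(b n * (γ₀^2/(1+γ₀^2))^n))
          = (fun n : ℕ => 8*((n:ℝ)-1)*a (n-1)*(γ₀^2/(1+γ₀^2))^n) n
            - (fun n : ℕ => 8*((n:ℝ)-1)*a (n-1)*(γ₀^2/(1+γ₀^2))^n) (n+1) := by
        intro n
        match n with
        | 0 => simp [ha0, hb0]
        | (m+1) =>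
          have e := hE1 m
          simp only [Nat.add_sub_cancel]
          push_cast
          linear_combination ((γ₀^2/(1+γ₀^2))^m*(γ₀^2/(1+γ₀^2))) * e + (((m:ℝ)+1) * a (m+1) * (γ₀^2/(1+γ₀^2))^m) * hD4
      have hgtend : Tendsto (fun n : ℕ => 8*((n:ℝ)-1)*a (n-1)*(γ₀^2/(1+γ₀^2))^n) atTop (nhds 0) := by
        refine squeeze_zero_norm (a := fun n : ℕ => 8*U*((n:ℝ)*(γ₀^2/(1+γ₀^2))^n)) ?_ ?_
        · intro n
          match n with
          | 0 => simp [ha0]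
          | (m+1) =>
            simp only [Nat.add_sub_cancel, Real.norm_eq_abs]
            push_cast
            rw [show 8*((m:ℝ)+1-1)*a m*(γ₀^2/(1+γ₀^2))^(m+1) = 8*(m:ℝ)*a m*(γ₀^2/(1+γ₀^2))^(m+1) from by ring]
            rw [abs_mul, abs_mul, abs_pow, abs_of_nonneg hY0,
              abs_of_nonneg (show (0:ℝ) ≤ 8*(m:ℝ) by positivity)]
            have h3 : (0:ℝ) ≤ (γ₀^2/(1+γ₀^2))^(m+1) := pow_nonneg hY0 _
            have h5 : 8*(m:ℝ)*|a m| ≤ 8*(m:ℝ)*U :=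
              mul_le_mul_of_nonneg_left (hUa m) (by positivity)
            have h6 := mul_le_mul_of_nonneg_right h5 h3
            have h7 : (0:ℝ) ≤ U*(γ₀^2/(1+γ₀^2))^(m+1) := mul_nonneg hU0 h3
            nlinarith [h6, h7]
        · have := htendaux.const_mul (8*U)
          simpa using this
      have hsum_t : Summable (fun n : ℕ => 4*γ₀*(a n * ((n:ℝ) * (γ₀^2/(1+γ₀^2))^(n-1) * (2*γ₀/(1+γ₀^2)^2)))
          + 6*(a n * (γ₀^2/(1+γ₀^2))^n) - 13*(b n * (γ₀^2/(1+γ₀^2))^n)) := (hsum1.add hsum2).sub hsum3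
      rw [tsum_eq_of_telescope _ _ hsum_t hterm hgtend]
      simp [ha0]
    -- second equation
    have hEq2 : 4*γ₀*(∑' n : ℕ, b n * ((n:ℝ) * (γ₀^2/(1+γ₀^2))^(n-1) * (2*γ₀/(1+γ₀^2)^2)))
        + 9*(∑' n : ℕ, b n * (γ₀^2/(1+γ₀^2))^n)
        - 10/(1+γ₀^2)*((∑' n : ℕ, a n * (γ₀^2/(1+γ₀^2))^n) + γ₀^2*A) = 0 := by
      have hsum1 : Summable (fun n : ℕ => 4*γ₀*(b n * ((n:ℝ) * (γ₀^2/(1+γ₀^2))^(n-1) * (2*γ₀/(1+γ₀^2)^2)))) :=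
        Snb.mul_left _
      have hsum2 : Summable (fun n : ℕ => 9*(b n * (γ₀^2/(1+γ₀^2))^n)) := Sb.mul_left _
      have hsum3 : Summable (fun n : ℕ => 10/(1+γ₀^2)*(a n * (γ₀^2/(1+γ₀^2))^n)) := Sa.mul_left _
      have hsum4 : Summable (fun n : ℕ => if n = 1 then 10*A*(γ₀^2/(1+γ₀^2)) else 0) :=
        (hasSum_ite_eq 1 (10*A*(γ₀^2/(1+γ₀^2)))).summable
      have hcombine : ∑' n : ℕ, (4*γ₀*(b n * ((n:ℝ) * (γ₀^2/(1+γ₀^2))^(n-1) * (2*γ₀/(1+γ₀^2)^2)))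
            + 9*(b n * (γ₀^2/(1+γ₀^2))^n) - 10/(1+γ₀^2)*(a n * (γ₀^2/(1+γ₀^2))^n)
            - (if n = 1 then 10*A*(γ₀^2/(1+γ₀^2)) else 0))
          = 4*γ₀*(∑' n : ℕ, b n * ((n:ℝ) * (γ₀^2/(1+γ₀^2))^(n-1) * (2*γ₀/(1+γ₀^2)^2)))
            + 9*(∑' n : ℕ, b n * (γ₀^2/(1+γ₀^2))^n)
            - 10/(1+γ₀^2)*(∑' n : ℕ, a n * (γ₀^2/(1+γ₀^2))^n) - 10*A*(γ₀^2/(1+γ₀^2)) := by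
        rw [(((hsum1.add hsum2).sub hsum3)).tsum_sub hsum4,
          (hsum1.add hsum2).tsum_sub hsum3, hsum1.tsum_add hsum2,
          tsum_mul_left, tsum_mul_left, tsum_mul_left, tsum_ite_eq]
      have hterm : ∀ n : ℕ, (4*γ₀*(b n * ((n:ℝ) * (γ₀^2/(1+γ₀^2))^(n-1) * (2*γ₀/(1+γ₀^2)^2)))
          + 9*(b n * (γ₀^2/(1+γ₀^2))^n) - 10/(1+γ₀^2)*(a n * (γ₀^2/(1+γ₀^2))^n)
          - (if n = 1 then 10*A*(γ₀^2/(1+γ₀^2)) else 0))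
          = (fun n : ℕ => (8*((n:ℝ)-1)*b (n-1) - 10*a (n-1))*(γ₀^2/(1+γ₀^2))^n) n
            - (fun n : ℕ => (8*((n:ℝ)-1)*b (n-1) - 10*a (n-1))*(γ₀^2/(1+γ₀^2))^n) (n+1) := by
        intro n
        match n with
        | 0 => simp [ha0, hb0]
        | 1 =>
          have e := hE2 0
          rw [if_pos rfl] at e
          simp only [Nat.add_sub_cancel, if_pos rfl]
          push_cast
          push_cast at e
          linear_combination (γ₀^2/(1+γ₀^2)) * e + (b 1 * (γ₀^2/(1+γ₀^2))^0) * hD4 - (a 1 * (γ₀^2/(1+γ₀^2))) * hW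
        | (m+2) =>
          have e := hE2 (m+1)
          rw [if_neg (by omega)] at e
          simp only [Nat.add_sub_cancel, if_neg (show ¬(m+2 = 1) by omega)]
          push_cast
          push_cast at e
          linear_combination ((γ₀^2/(1+γ₀^2))^(m+1)*(γ₀^2/(1+γ₀^2))) * e + (((m:ℝ)+2) * b (m+2) * (γ₀^2/(1+γ₀^2))^(m+1)) * hD4
            - (a (m+2) * (γ₀^2/(1+γ₀^2))^(m+1) * (γ₀^2/(1+γ₀^2))) * hW
      have hgtend : Tendsto (fun n : ℕ => (8*((n:ℝ)-1)*b (n-1) - 10*a (n-1))*(γ₀^2/(1+γ₀^2))^n)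
          atTop (nhds 0) := by
        refine squeeze_zero_norm (a := fun n : ℕ => 8*U*((n:ℝ)*(γ₀^2/(1+γ₀^2))^n) + 10*U*(γ₀^2/(1+γ₀^2))^n) ?_ ?_
        · intro n
          match n with
          | 0 =>
            simp [ha0, hb0]
            positivity
          | (m+1) =>
            simp only [Nat.add_sub_cancel, Real.norm_eq_abs]
            push_cast
            rw [abs_mul, abs_pow, abs_of_nonneg hY0]
            have h1 : |8*((m:ℝ)+1-1)*b m - 10*a m| ≤ 8*(m:ℝ)*U + 10*U := by
              rw [show 8*((m:ℝ)+1-1)*b m - 10*a m = 8*(m:ℝ)*b m - 10*a m from by ring]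
              calc |8*(m:ℝ)*b m - 10*a m|
                  ≤ |8*(m:ℝ)*b m| + |10*a m| := abs_sub _ _
                _ = 8*(m:ℝ)*|b m| + 10*|a m| := by
                    rw [abs_mul, abs_mul, abs_mul, Nat.abs_cast]
                    norm_num
                _ ≤ 8*(m:ℝ)*U + 10*U := by
                    have h5 : 8*(m:ℝ)*|b m| ≤ 8*(m:ℝ)*U :=
                      mul_le_mul_of_nonneg_left (hUb m) (by positivity)
                    have h6 := hUa m
                    linarith
            have h3 : (0:ℝ) ≤ (γ₀^2/(1+γ₀^2))^(m+1) := pow_nonneg hY0 _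
            have h6 := mul_le_mul_of_nonneg_right h1 h3
            have h7 : (0:ℝ) ≤ U*(γ₀^2/(1+γ₀^2))^(m+1) := mul_nonneg hU0 h3
            nlinarith [h6, h7]
        · have h5 := htendaux.const_mul (8*U)
          have h6 := htendpow.const_mul (10*U)
          have := h5.add h6
          simpa using this
      have hsum_t : Summable (fun n : ℕ => 4*γ₀*(b n * ((n:ℝ) * (γ₀^2/(1+γ₀^2))^(n-1) * (2*γ₀/(1+γ₀^2)^2)))
          + 9*(b n * (γ₀^2/(1+γ₀^2))^n) - 10/(1+γ₀^2)*(a n * (γ₀^2/(1+γ₀^2))^n)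
          - (if n = 1 then 10*A*(γ₀^2/(1+γ₀^2)) else 0)) := ((hsum1.add hsum2).sub hsum3).sub hsum4
      have hzero : (fun n : ℕ => (8*((n:ℝ)-1)*b (n-1) - 10*a (n-1))*(γ₀^2/(1+γ₀^2))^n) 0 = 0 := by
        simp [ha0, hb0]
      have htel := (hcombine.symm.trans
        (tsum_eq_of_telescope _ _ hsum_t hterm hgtend)).trans hzero
      have hYA : 10/(1+γ₀^2)*(γ₀^2*A) = 10*A*(γ₀^2/(1+γ₀^2)) := by
        field_simp
      linarith [htel, hYA.ge, hYA.le]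
    exact ⟨∑' n : ℕ, a n * ((n:ℝ) * (γ₀^2/(1+γ₀^2))^(n-1) * (2*γ₀/(1+γ₀^2)^2)),
      ∑' n : ℕ, b n * ((n:ℝ) * (γ₀^2/(1+γ₀^2))^(n-1) * (2*γ₀/(1+γ₀^2)^2)),
      hder a hua hUa, hder b hub hUb, hEq1, by linarith [hEq2]⟩
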